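/- Assume p and q are even (hence both ≥ 2). Then the number of tuples (z, b, a), where z is a ρ-vector, b_1 ≥ b_2 ≥ … ≥ b_q ≥ 0 and a_1 ≥ a_2 ≥ … ≥ a_{p−1} ≥ 0 are integers, satisfying z_i − 2b_i = q + 1 − i for all 1 ≤ i ≤ q and z_{q+j} + 2a_{p−j} = −j for all 1 ≤ j ≤ p−1, equals the binomial coefficient C(k−1, q/2) = C(k−1, (p−2)/2). -/

import Mathlib

/-- A solution for the Dirac cohomology multiplicity count of `X'(p,q;0,1)` for
`Sp(2n,ℝ)`, `n = 2k−1 = p+q−1`: a ρ-vector `z` (strictly decreasing with absolute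
values exactly `{1, …, n}`), weakly decreasing nonnegative integers
`b_1 ≥ … ≥ b_q ≥ 0`, `a_1 ≥ … ≥ a_{p−1} ≥ 0` with `z_i − 2b_i = q + 1 − i` for
`1 ≤ i ≤ q` and `z_{q+j} + 2a_{p−j} = −j` for `1 ≤ j ≤ p−1`
(written here with 0-based indices). -/
structure RhoSol01 (n p q : ℕ) (hp : 1 ≤ p) (hn : q - 1 + p = n) where
  z : Fin n → ℤ
  b : Fin q → ℤ
  a : Fin (p - 1) → ℤ
  z_anti : StrictAnti z
  z_abs : Finset.univ.image (fun i => |z i|) = Finset.Icc (1 : ℤ) (n : ℤ)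
  b_anti : Antitone b
  a_anti : Antitone a
  b_nonneg : ∀ i, 0 ≤ b i
  a_nonneg : ∀ m, 0 ≤ a m
  hzb : ∀ i : Fin q,
    z ⟨i.1, by have := i.isLt; omega⟩ - 2 * b i = (q : ℤ) - i.1
  hza : ∀ j : Fin (p - 1),
    z ⟨q + j.1, by have := j.isLt; omega⟩ +
      2 * a ⟨p - 2 - j.1, by have := j.isLt; omega⟩ = -(j.1 : ℤ) - 1

namespace Stmt15

/-- `t`-th smallest element of `S` (as a natural number), when `S.card = c` and `t < c`. -/
def sv (K c : ℕ) (S : Finset (Fin K)) (t : ℕ) : ℕ :=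
  if h : S.card = c ∧ t < c then ((S.orderEmbOfFin h.1 ⟨t, h.2⟩ : Fin K) : ℕ) else 0

variable {K c t : ℕ} {S : Finset (Fin K)}

lemma sv_lt (hS : S.card = c) (ht : t < c) : sv K c S t < K := by
  have : 0 < K := (S.orderEmbOfFin hS ⟨t, ht⟩).pos
  unfold sv
  split
  · exact (S.orderEmbOfFin _ _).isLt
  · omega

lemma sv_strictMono (hS : S.card = c) {t t' : ℕ} (h : t < t') (ht' : t' < c) :
    sv K c S t < sv K c S t' := by
  unfold sv
  rw [dif_pos ⟨hS, by omega⟩, dif_pos ⟨hS, ht'⟩]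
  exact_mod_cast (S.orderEmbOfFin hS).strictMono (Fin.mk_lt_mk.mpr h)

lemma mem_iff_sv (hS : S.card = c) (j : Fin K) :
    j ∈ S ↔ ∃ t, t < c ∧ sv K c S t = j.1 := by
  constructor
  · intro hj
    have : (j : Fin K) ∈ Set.range (S.orderEmbOfFin hS) := by
      rw [Finset.range_orderEmbOfFin]; exact_mod_cast hj
    obtain ⟨i, hi⟩ := this
    refine ⟨i.1, i.isLt, ?_⟩
    unfold sv
    rw [dif_pos ⟨hS, i.isLt⟩]
    simp only [Fin.eta, hi]
  · rintro ⟨t, ht, hv⟩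
    have hmem := Finset.orderEmbOfFin_mem S hS ⟨t, ht⟩
    unfold sv at hv
    rw [dif_pos ⟨hS, ht⟩] at hv
    have : (S.orderEmbOfFin hS ⟨t, ht⟩) = j := Fin.ext hv
    rwa [this] at hmem

lemma sv_add_le (hS : S.card = c) :
    ∀ t' t : ℕ, t ≤ t' → t' < c → sv K c S t + (t' - t) ≤ sv K c S t' := by
  intro t'
  induction t' with
  | zero =>
    intro t ht _
    obtain rfl : t = 0 := Nat.le_zero.mp ht
    simp
  | succ m ih =>
    intro t ht hc'
    rcases Nat.eq_or_lt_of_le ht with rfl | h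
    · omega
    · have h1 := ih t (by omega) (by omega)
      have h2 : sv K c S m < sv K c S (m+1) := sv_strictMono hS (by omega) hc'
      omega

lemma sv_self_le (hS : S.card = c) (ht : t < c) : t ≤ sv K c S t := by
  have := sv_add_le hS t 0 (by omega) ht
  omega

section Construction

variable (c d : ℕ)

/-- ascending positive values -/
def wv (S : Finset (Fin (c+d))) (r : ℕ) : ℤ :=
  2 * (sv (c+d) c S (r/2) : ℤ) + 1 + (r % 2 : ℕ)

/-- ascending absolute values of negative part -/
def mvf (S : Finset (Fin (c+d))) (j : ℕ) : ℤ :=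
  if j = 2*d then 2*(c+d)+1 else 2 * (sv (c+d) d Sᶜ (j/2) : ℤ) + 1 + (j % 2 : ℕ)

def zf (S : Finset (Fin (c+d))) : Fin (2*(c+d)+1) → ℤ :=
  fun i => if i.1 < 2*c then wv c d S (2*c-1-i.1) else -(mvf c d S (i.1-2*c))

def bf (S : Finset (Fin (c+d))) : Fin (2*c) → ℤ :=
  fun i => (sv (c+d) c S ((2*c-1-i.1)/2) : ℤ) - (((2*c-1-i.1)/2 : ℕ) : ℤ)

def af (S : Finset (Fin (c+d))) : Fin (2*d+1) → ℤ :=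
  fun v => if v.1 = 0 then (c:ℤ)
    else (sv (c+d) d Sᶜ ((2*d-v.1)/2) : ℤ) - (((2*d-v.1)/2 : ℕ) : ℤ)

variable {c d} {S : Finset (Fin (c+d))} (hS : S.card = c)

lemma hT (hS : S.card = c) : Sᶜ.card = d := by
  simp [Finset.card_compl, hS]

lemma wv_lt (hS : S.card = c) {r r' : ℕ} (h : r < r') (hr' : r' < 2*c) :
    wv c d S r < wv c d S r' := by
  have hcase : r/2 < r'/2 ∨ (r/2 = r'/2 ∧ r%2 < r'%2) := by omega
  unfold wv
  rcases hcase with h1 | ⟨h1, h2⟩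
  · have := sv_strictMono hS h1 (by omega)
    have b1 : r % 2 < 2 := by omega
    have b2 : r' % 2 < 2 := by omega
    push_cast
    omega
  · rw [h1]
    push_cast
    omega

lemma wv_pos (r : ℕ) : 1 ≤ wv c d S r := by
  unfold wv; push_cast; omega

lemma wv_le (hS : S.card = c) {r : ℕ} (hr : r < 2*c) : wv c d S r ≤ 2*(c+d) := by
  have h1 : sv (c+d) c S (r/2) < c + d := sv_lt hS (by omega)
  have h2 : r % 2 < 2 := by omega
  unfold wv
  push_cast
  omega

lemma wv_ge (hS : S.card = c) {r : ℕ} (hr : r < 2*c) : (r : ℤ) + 1 ≤ wv c d S r := by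
  have h1 : r/2 ≤ sv (c+d) c S (r/2) := sv_self_le hS (by omega)
  unfold wv
  push_cast
  omega

lemma mvf_lt (hS : S.card = c) {j j' : ℕ} (h : j < j') (hj' : j' < 2*d+1) :
    mvf c d S j < mvf c d S j' := by
  unfold mvf
  rcases Nat.eq_or_lt_of_le (by omega : j' ≤ 2*d) with rfl | hj2
  · rw [if_pos rfl, if_neg (by omega)]
    have h1 : sv (c+d) d Sᶜ (j/2) < c + d := sv_lt (hT hS) (by omega)
    have h2 : j % 2 < 2 := by omega
    push_cast
    omega
  · rw [if_neg (by omega), if_neg (by omega)]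
    have hcase : j/2 < j'/2 ∨ (j/2 = j'/2 ∧ j%2 < j'%2) := by omega
    rcases hcase with h1 | ⟨h1, h2⟩
    · have := sv_strictMono (hT hS) h1 (by omega)
      have b2 : j' % 2 < 2 := by omega
      push_cast
      omega
    · rw [h1]
      push_cast
      omega

lemma mvf_pos (j : ℕ) : 1 ≤ mvf c d S j := by
  unfold mvf
  split
  · push_cast; omega
  · push_cast; omega

lemma mvf_le (hS : S.card = c) {j : ℕ} (hj : j < 2*d+1) :
    mvf c d S j ≤ 2*(c+d)+1 := by
  unfold mvf
  split
  · push_cast; omega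
  · have h1 : sv (c+d) d Sᶜ (j/2) < c + d := sv_lt (hT hS) (by omega)
    have h2 : j % 2 < 2 := by omega
    push_cast
    omega

lemma mvf_ge (hS : S.card = c) {j : ℕ} (hj : j < 2*d+1) :
    (j : ℤ) + 1 ≤ mvf c d S j := by
  unfold mvf
  split
  · push_cast; omega
  · have h1 : j/2 ≤ sv (c+d) d Sᶜ (j/2) := sv_self_le (hT hS) (by omega)
    push_cast
    omega

lemma zf_anti (hS : S.card = c) : StrictAnti (zf c d S) := by
  intro i i' h
  unfold zf
  rcases Nat.lt_or_ge i'.1 (2*c) with h1 | h1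
  · rw [if_pos h1, if_pos (by omega)]
    exact wv_lt hS (by omega) (by omega)
  · rw [if_neg (by omega)]
    rcases Nat.lt_or_ge i.1 (2*c) with h2 | h2
    · rw [if_pos h2]
      have := mvf_pos (S := S) (c := c) (d := d) (i'.1 - 2*c)
      have := wv_pos (S := S) (c := c) (d := d) (2*c-1-i.1)
      omega
    · rw [if_neg (by omega)]
      have : mvf c d S (i.1 - 2*c) < mvf c d S (i'.1 - 2*c) := by
        have := i'.isLt
        exact mvf_lt hS (by have := Fin.lt_iff_val_lt_val.mp h; omega) (by omega)
      omega

end Construction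

section Sol

variable {c d : ℕ} {S : Finset (Fin (c+d))}

lemma zf_mk_pos (hS : S.card = c) {r : ℕ} (hr : r < 2*c) (h2 : 2*c-1-r < 2*(c+d)+1) :
    zf c d S ⟨2*c-1-r, h2⟩ = wv c d S r := by
  simp only [zf]
  rw [if_pos (show 2*c-1-r < 2*c by omega)]
  congr 1
  omega

lemma zf_mk_neg (hS : S.card = c) {j : ℕ} (hj : j < 2*d+1) (h2 : 2*c + j < 2*(c+d)+1) :
    zf c d S ⟨2*c + j, h2⟩ = -(mvf c d S j) := by
  simp only [zf]
  rw [if_neg (show ¬ (2*c + j < 2*c) by omega)]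
  congr 2
  omega

def sol (c d : ℕ) (S : Finset (Fin (c+d))) (hS : S.card = c) (hc : 1 ≤ c) :
    RhoSol01 (2*(c+d)+1) (2*d+2) (2*c) (by omega) (by omega) where
  z := zf c d S
  b := bf c d S
  a := fun v => af c d S ⟨v.1, by have := v.isLt; omega⟩
  z_anti := zf_anti hS
  z_abs := by
    ext x
    simp only [Finset.mem_image, Finset.mem_univ, true_and, Finset.mem_Icc]
    constructor
    · rintro ⟨i, rfl⟩
      by_cases h : i.1 < 2*c
      · have h1 := wv_pos (S:=S) (c:=c) (d:=d) (2*c-1-i.1)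
        have h2 := wv_le hS (show 2*c-1-i.1 < 2*c by omega)
        simp only [zf]
        rw [if_pos h, abs_of_nonneg (by omega)]
        push_cast
        omega
      · have h1 := mvf_pos (S:=S) (c:=c) (d:=d) (i.1-2*c)
        have h2 := mvf_le hS (show i.1-2*c < 2*d+1 by have := i.isLt; omega)
        simp only [zf]
        rw [if_neg h, abs_neg, abs_of_nonneg (by omega)]
        push_cast
        omega
    · rintro ⟨hx1, hx2⟩
      push_cast at hx2
      by_cases hxn : x = 2*(c+d)+1
      · refine ⟨⟨2*c + 2*d, by omega⟩, ?_⟩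
        rw [zf_mk_neg hS (by omega)]
        rw [mvf, if_pos rfl, hxn, abs_neg, abs_of_nonneg (by push_cast; omega)]
      · obtain ⟨u, e, hu, he, hx⟩ : ∃ u e : ℕ, u < c+d ∧ e < 2 ∧ x = 2*u+1+e :=
          ⟨(x.toNat-1)/2, (x.toNat-1)%2, by omega, by omega, by omega⟩
        by_cases hmem : (⟨u, hu⟩ : Fin (c+d)) ∈ S
        · obtain ⟨t, ht, hsv⟩ := (mem_iff_sv hS _).mp hmem
          refine ⟨⟨2*c-1-(2*t+e), by omega⟩, ?_⟩
          rw [zf_mk_pos hS (show 2*t+e < 2*c by omega)]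
          have harg1 : (2*t+e)/2 = t := by omega
          have harg2 : (2*t+e)%2 = e := by omega
          rw [wv, harg1, harg2, hsv]
          rw [abs_of_nonneg (by push_cast; omega)]
          push_cast
          omega
        · have hmem' : (⟨u, hu⟩ : Fin (c+d)) ∈ Sᶜ := Finset.mem_compl.mpr hmem
          obtain ⟨t, ht, hsv⟩ := (mem_iff_sv (hT hS) _).mp hmem'
          refine ⟨⟨2*c + (2*t+e), by omega⟩, ?_⟩
          rw [zf_mk_neg hS (show 2*t+e < 2*d+1 by omega)]
          have harg1 : (2*t+e)/2 = t := by omega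
          have harg2 : (2*t+e)%2 = e := by omega
          rw [mvf, if_neg (by omega), harg1, harg2, hsv]
          rw [abs_neg, abs_of_nonneg (by push_cast; omega)]
          push_cast
          omega
  b_anti := by
    intro i i' hii
    simp only [bf]
    have hii' : i.1 ≤ i'.1 := hii
    set t' := (2*c-1-i'.1)/2 with ht'
    set t := (2*c-1-i.1)/2 with ht
    have h1 : t' ≤ t := by omega
    have h2 : t < c := by have := i.isLt; omega
    have := sv_add_le hS t t' h1 h2
    omega
  a_anti := by
    intro v v' hvv
    have hvv' : v.1 ≤ v'.1 := hvv
    simp only [af]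
    by_cases h0 : v.1 = 0
    · rw [if_pos h0]
      by_cases h0' : v'.1 = 0
      · rw [if_pos h0']
      · rw [if_neg h0']
        have hd : 1 ≤ d := by have := v'.isLt; omega
        set t' := (2*d - v'.1)/2 with ht'
        have h1 : t' ≤ d - 1 := by have := v'.isLt; omega
        have h2 := sv_add_le (hT hS) (d-1) t' h1 (by omega)
        have h3 := sv_lt (hT hS) (show d-1 < d by omega)
        omega
    · rw [if_neg h0]
      have h0' : ¬ v'.1 = 0 := by omega
      rw [if_neg h0']
      set t' := (2*d - v'.1)/2 with ht'
      set t := (2*d - v.1)/2 with ht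
      have h1 : t' ≤ t := by omega
      have h2 : t < d := by omega
      have := sv_add_le (hT hS) t t' h1 h2
      omega
  b_nonneg := by
    intro i
    simp only [bf]
    have := sv_self_le hS (show (2*c-1-i.1)/2 < c by have := i.isLt; omega)
    omega
  a_nonneg := by
    intro v
    simp only [af]
    split
    · positivity
    · rename_i h0
      have hv := v.isLt
      have := sv_self_le (hT hS) (show (2*d - v.1)/2 < d by have : v.1 ≠ 0 := fun h => h0 h; omega)
      omega
  hzb := by
    intro i
    have h : i.1 < 2*c := i.isLt
    simp only [zf, bf]
    rw [if_pos (show i.1 < 2*c from h)]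
    rw [wv]
    push_cast
    omega
  hza := by
    intro j
    have hj : j.1 < 2*d+1 := by have := j.isLt; omega
    simp only [af]
    rw [show (⟨2*c + j.1, by omega⟩ : Fin (2*(c+d)+1)) = ⟨2*c + j.1, by omega⟩ from rfl]
    rw [zf_mk_neg hS hj]
    by_cases h0 : j.1 = 2*d
    · rw [mvf, if_pos h0, if_pos (by show 2*d+2-2-j.1 = 0; omega)]
      push_cast
      omega
    · rw [mvf, if_neg h0, if_neg (by show ¬ (2*d+2-2-j.1 = 0); omega)]
      have harg : (2*d - (2*d+2-2-j.1))/2 = j.1/2 := by omega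
      rw [show sv (c+d) d Sᶜ ((2*d - (⟨2*d+2-2-j.1, by omega⟩ : Fin (2*d+2-1)).1)/2)
            = sv (c+d) d Sᶜ (j.1/2) by congr 1 <;> omega]
      push_cast
      omega

end Sol

section Helpers

theorem RhoSol01.ext' {n p q : ℕ} {hp : 1 ≤ p} {hn : q - 1 + p = n}
    {x y : RhoSol01 n p q hp hn} (hz : x.z = y.z) (hb : x.b = y.b) (ha : x.a = y.a) :
    x = y := by
  cases x; cases y; cases hz; cases hb; cases ha; rfl

lemma cardFinFilter (m : ℕ) (P : ℕ → Prop) [DecidablePred P] :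
    (Finset.univ.filter (fun i : Fin m => P i.1)).card = ((Finset.range m).filter P).card := by
  rw [Finset.card_filter, Finset.card_filter, Fin.sum_univ_eq_sum_range (fun a => if P a then 1 else 0)]

lemma image_rev_univ (n : ℕ) : (Finset.univ : Finset (Fin n)).image (fun i => i.rev) = Finset.univ := by
  apply Finset.eq_univ_of_forall
  intro j
  exact Finset.mem_image.mpr ⟨j.rev, Finset.mem_univ _, by simp⟩

lemma strictAnti_eq_of_image_eq {n : ℕ} {f g : Fin n → ℤ} (hf : StrictAnti f) (hg : StrictAnti g)
    (h : Finset.univ.image f = Finset.univ.image g) : f = g := by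
  set F : Fin n → ℤ := fun i => -(f i) with hFdef
  set G : Fin n → ℤ := fun i => -(g i) with hGdef
  have hF : StrictMono F := fun a b hab => neg_lt_neg_iff.mpr (hf hab)
  have hG : StrictMono G := fun a b hab => neg_lt_neg_iff.mpr (hg hab)
  have himgF : Finset.univ.image F = (Finset.univ.image f).image (fun x => -x) := by
    rw [Finset.image_image]; rfl
  have himgG : Finset.univ.image G = (Finset.univ.image g).image (fun x => -x) := by
    rw [Finset.image_image]; rfl
  have himg : Finset.univ.image F = Finset.univ.image G := by rw [himgF, himgG, h]
  have hcard : (Finset.univ.image F).card = n := by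
    rw [Finset.card_image_of_injective _ hF.injective, Finset.card_univ, Fintype.card_fin]
  have hFeq := Finset.orderEmbOfFin_unique hcard
    (f := F) (fun x => Finset.mem_image_of_mem _ (Finset.mem_univ x)) hF
  have hGeq := Finset.orderEmbOfFin_unique hcard
    (f := G) (fun x => by rw [himg]; exact Finset.mem_image_of_mem _ (Finset.mem_univ x)) hG
  have hFG : F = G := hFeq.trans hGeq.symm
  funext i
  have : F i = G i := by rw [hFG]
  simp only [hFdef, hGdef] at this
  omega

end Helpers

section Struct

variable {c d : ℕ} {hp : 1 ≤ 2*d+2} {hn : 2*c - 1 + (2*d+2) = 2*(c+d)+1}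

/-- the set of `j` such that `2j+2` appears as a (positive) value of `z` -/
def extS (s : RhoSol01 (2*(c+d)+1) (2*d+2) (2*c) hp hn) : Finset (Fin (c+d)) :=
  Finset.univ.filter (fun j => (2*(j.1:ℤ)+2) ∈ Finset.univ.image s.z)

variable (s : RhoSol01 (2*(c+d)+1) (2*d+2) (2*c) hp hn)

lemma zpos (i : Fin (2*(c+d)+1)) (h : i.1 < 2*c) :
    ∃ B : ℤ, 0 ≤ B ∧ s.z i = 2*c - i.1 + 2*B := by
  have hzb := s.hzb ⟨i.1, h⟩
  refine ⟨s.b ⟨i.1, h⟩, s.b_nonneg _, ?_⟩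
  have hidx : (⟨(⟨i.1, h⟩ : Fin (2*c)).1, by omega⟩ : Fin (2*(c+d)+1)) = i := by
    apply Fin.ext; rfl
  rw [hidx] at hzb
  push_cast at hzb ⊢
  omega

lemma zneg (i : Fin (2*(c+d)+1)) (h : 2*c ≤ i.1) :
    ∃ A : ℤ, 0 ≤ A ∧ s.z i = -(((i.1 : ℤ) - 2*c) + 1) - 2*A := by
  have hlt : i.1 - 2*c < 2*d+2-1 := by have := i.isLt; omega
  have hza := s.hza ⟨i.1 - 2*c, hlt⟩
  simp only [Fin.val_mk] at hza
  have hidx : (⟨2*c + (i.1-2*c), by have := i.isLt; omega⟩ : Fin (2*(c+d)+1)) = i := by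
    apply Fin.ext; show 2*c + (i.1 - 2*c) = i.1; omega
  rw [hidx] at hza
  obtain ⟨A, hA1, hA2⟩ : ∃ A : ℤ, s.z i + 2*A = -(((i.1-2*c : ℕ)) : ℤ) - 1 ∧ 0 ≤ A :=
    ⟨_, hza, s.a_nonneg _⟩
  exact ⟨A, hA2, by omega⟩

lemma zsign (i : Fin (2*(c+d)+1)) : (i.1 < 2*c ∧ 1 ≤ s.z i) ∨ (2*c ≤ i.1 ∧ s.z i ≤ -1) := by
  rcases Nat.lt_or_ge i.1 (2*c) with h | h
  · obtain ⟨B, hB, hz⟩ := zpos s i h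
    left; exact ⟨h, by omega⟩
  · obtain ⟨A, hA, hz⟩ := zneg s i h
    right; refine ⟨h, by omega⟩

lemma zbound (i : Fin (2*(c+d)+1)) : 1 ≤ |s.z i| ∧ |s.z i| ≤ 2*(c+d)+1 := by
  have hmem : |s.z i| ∈ Finset.univ.image (fun i => |s.z i|) :=
    Finset.mem_image_of_mem _ (Finset.mem_univ i)
  rw [s.z_abs] at hmem
  rw [Finset.mem_Icc] at hmem
  push_cast at hmem
  exact_mod_cast hmem

lemma zinj : ∀ i i' : Fin (2*(c+d)+1), |s.z i| = |s.z i'| → i = i' := by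
  have hcard : (Finset.univ.image (fun i => |s.z i|)).card = (Finset.univ : Finset (Fin (2*(c+d)+1))).card := by
    rw [s.z_abs, Int.card_Icc, Finset.card_univ, Fintype.card_fin]
    omega
  have := Finset.card_image_iff.mp hcard
  intro i i' hii
  exact this (Finset.mem_coe.mpr (Finset.mem_univ i)) (Finset.mem_coe.mpr (Finset.mem_univ i')) hii

lemma zsurjabs {x : ℤ} (h1 : 1 ≤ x) (h2 : x ≤ 2*(c+d)+1) :
    ∃ i, |s.z i| = x := by
  have : x ∈ Finset.Icc (1:ℤ) ((2*(c+d)+1 : ℕ) : ℤ) := by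
    rw [Finset.mem_Icc]; push_cast; omega
  rw [← s.z_abs] at this
  obtain ⟨i, _, hi⟩ := Finset.mem_image.mp this
  exact ⟨i, hi⟩

/-- indices with value in `[1,t]` -/
def IW (t : ℕ) : Finset (Fin (2*(c+d)+1)) :=
  Finset.univ.filter (fun i => 1 ≤ s.z i ∧ s.z i ≤ (t:ℤ))

/-- indices with value in `[-t,-1]` -/
def IM (t : ℕ) : Finset (Fin (2*(c+d)+1)) :=
  Finset.univ.filter (fun i => -(t:ℤ) ≤ s.z i ∧ s.z i ≤ -1)

lemma cardIWM {t : ℕ} (ht : t ≤ 2*(c+d)+1) : (IW s t).card + (IM s t).card = t := by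
  have hdisj : Disjoint (IW s t) (IM s t) := by
    rw [Finset.disjoint_left]
    intro i hi1 hi2
    simp only [IW, IM, Finset.mem_filter] at hi1 hi2
    omega
  have hunion : IW s t ∪ IM s t = Finset.univ.filter (fun i => 1 ≤ |s.z i| ∧ |s.z i| ≤ (t:ℤ)) := by
    ext i
    simp only [IW, IM, Finset.mem_union, Finset.mem_filter, Finset.mem_univ, true_and]
    rcases abs_cases (s.z i) with ⟨h1, h2⟩ | ⟨h1, h2⟩ <;> omega
  have himg : ((Finset.univ.filter (fun i => 1 ≤ |s.z i| ∧ |s.z i| ≤ (t:ℤ))).image (fun i => |s.z i|))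
      = (Finset.univ.image (fun i => |s.z i|)).filter (fun y => 1 ≤ y ∧ y ≤ (t:ℤ)) := by
    ext y
    simp only [Finset.mem_image, Finset.mem_filter, Finset.mem_univ, true_and]
    constructor
    · rintro ⟨i, ⟨hi1, hi2⟩, rfl⟩
      exact ⟨⟨i, rfl⟩, hi1, hi2⟩
    · rintro ⟨⟨i, rfl⟩, hy1, hy2⟩
      exact ⟨i, ⟨hy1, hy2⟩, rfl⟩
  have hcard1 : (Finset.univ.filter (fun i => 1 ≤ |s.z i| ∧ |s.z i| ≤ (t:ℤ))).card
      = ((Finset.univ.image (fun i => |s.z i|)).filter (fun y => 1 ≤ y ∧ y ≤ (t:ℤ))).card := by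
    rw [← himg]
    exact (Finset.card_image_of_injOn (fun i _ i' _ hii => zinj s i i' hii)).symm
  rw [← Finset.card_union_of_disjoint hdisj, hunion, hcard1, s.z_abs]
  have hicc : (Finset.Icc (1:ℤ) ((2*(c+d)+1 : ℕ):ℤ)).filter (fun y => 1 ≤ y ∧ y ≤ (t:ℤ))
      = Finset.Icc (1:ℤ) (t:ℤ) := by
    ext y
    simp only [Finset.mem_filter, Finset.mem_Icc]
    push_cast
    omega
  rw [hicc, Int.card_Icc]
  omega

lemma cardIW_of_pos (i : Fin (2*(c+d)+1)) (h : i.1 < 2*c) :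
    (IW s (s.z i).toNat).card = 2*c - i.1 := by
  obtain ⟨B, hB, hzi⟩ := zpos s i h
  have hset : IW s (s.z i).toNat
      = Finset.univ.filter (fun i' : Fin (2*(c+d)+1) => i.1 ≤ i'.1 ∧ i'.1 < 2*c) := by
    ext i'
    simp only [IW, Finset.mem_filter, Finset.mem_univ, true_and]
    rw [Int.toNat_of_nonneg (by omega)]
    constructor
    · rintro ⟨h1, h2⟩
      have hle : i ≤ i' := (s.z_anti.le_iff_ge).mp h2
      refine ⟨Fin.le_def.mp hle, ?_⟩
      rcases zsign s i' with ⟨h3, h4⟩ | ⟨h3, h4⟩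
      · exact h3
      · omega
    · rintro ⟨h1, h2⟩
      have hz2 : s.z i' ≤ s.z i := s.z_anti.antitone (Fin.le_def.mpr h1)
      rcases zsign s i' with ⟨h3, h4⟩ | ⟨h3, h4⟩
      · exact ⟨h4, hz2⟩
      · omega
  rw [hset, cardFinFilter _ (fun a => i.1 ≤ a ∧ a < 2*c)]
  have : (Finset.range (2*(c+d)+1)).filter (fun a => i.1 ≤ a ∧ a < 2*c) = Finset.Ico i.1 (2*c) := by
    ext a
    simp only [Finset.mem_filter, Finset.mem_range, Finset.mem_Ico]
    omega
  rw [this, Nat.card_Ico]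

lemma cardIM_of_neg (i : Fin (2*(c+d)+1)) (h : 2*c ≤ i.1) :
    (IM s (-(s.z i)).toNat).card = i.1 + 1 - 2*c := by
  obtain ⟨A, hA, hzi⟩ := zneg s i h
  have hset : IM s (-(s.z i)).toNat
      = Finset.univ.filter (fun i' : Fin (2*(c+d)+1) => 2*c ≤ i'.1 ∧ i'.1 ≤ i.1) := by
    ext i'
    simp only [IM, Finset.mem_filter, Finset.mem_univ, true_and]
    rw [Int.toNat_of_nonneg (by omega), neg_neg]
    constructor
    · rintro ⟨h1, h2⟩
      have hle : i' ≤ i := (s.z_anti.le_iff_ge).mp h1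
      refine ⟨?_, Fin.le_def.mp hle⟩
      rcases zsign s i' with ⟨h3, h4⟩ | ⟨h3, h4⟩
      · omega
      · exact h3
    · rintro ⟨h1, h2⟩
      have hz2 : s.z i ≤ s.z i' := s.z_anti.antitone (Fin.le_def.mpr h2)
      rcases zsign s i' with ⟨h3, h4⟩ | ⟨h3, h4⟩
      · omega
      · exact ⟨hz2, h4⟩
  rw [hset, cardFinFilter _ (fun a => 2*c ≤ a ∧ a ≤ i.1)]
  have : (Finset.range (2*(c+d)+1)).filter (fun a => 2*c ≤ a ∧ a ≤ i.1) = Finset.Icc (2*c) i.1 := by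
    ext a
    have := i.isLt
    simp only [Finset.mem_filter, Finset.mem_range, Finset.mem_Icc]
    omega
  rw [this, Nat.card_Icc]

lemma evenIW {t : ℕ} (ht : t ≤ 2*(c+d)) (hte : t % 2 = 0) : (IW s t).card % 2 = 0 := by
  rcases Nat.eq_zero_or_pos t with rfl | htpos
  · have hempty : IW s 0 = ∅ := by
      rw [Finset.eq_empty_iff_forall_notMem]
      intro i hi
      simp only [IW, Finset.mem_filter] at hi
      omega
    simp [hempty]
  · obtain ⟨i, hi⟩ := zsurjabs s (x := (t:ℤ)) (by omega) (by push_cast; omega)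
    rcases zsign s i with ⟨h1, h2⟩ | ⟨h1, h2⟩
    · have hzi : s.z i = (t:ℤ) := by rcases abs_cases (s.z i) with ⟨ha,_⟩|⟨ha,_⟩ <;> omega
      obtain ⟨B, hB, hform⟩ := zpos s i h1
      have hcard := cardIW_of_pos s i h1
      rw [hzi] at hcard hform
      have htt : ((t:ℤ)).toNat = t := by omega
      rw [htt] at hcard
      omega
    · have hzi : s.z i = -(t:ℤ) := by rcases abs_cases (s.z i) with ⟨ha,_⟩|⟨ha,_⟩ <;> omega
      obtain ⟨A, hA, hform⟩ := zneg s i h1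
      have hcard := cardIM_of_neg s i h1
      rw [hzi] at hcard hform
      have htt : ((-(-(t:ℤ)))).toNat = t := by omega
      rw [htt] at hcard
      have htot := cardIWM s (t := t) (by omega)
      omega

lemma stepIW (t : ℕ) :
    (IW s (t+1)).card = (IW s t).card
      + (Finset.univ.filter (fun i => s.z i = (t:ℤ)+1)).card := by
  have hdisj : Disjoint (IW s t) (Finset.univ.filter (fun i => s.z i = (t:ℤ)+1)) := by
    rw [Finset.disjoint_left]
    intro i hi1 hi2
    simp only [IW, Finset.mem_filter] at hi1 hi2
    omega
  rw [← Finset.card_union_of_disjoint hdisj]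
  congr 1
  ext i
  simp only [IW, Finset.mem_union, Finset.mem_filter, Finset.mem_univ, true_and]
  push_cast
  omega

lemma eCard_le_one (x : ℤ) : (Finset.univ.filter (fun i => s.z i = x)).card ≤ 1 := by
  apply Finset.card_le_one.mpr
  intro a ha b hb
  simp only [Finset.mem_filter] at ha hb
  exact s.z_anti.injective (ha.2.trans hb.2.symm)

lemma eCard_pos_iff (x : ℤ) :
    (0 < (Finset.univ.filter (fun i => s.z i = x)).card) ↔ ∃ i, s.z i = x := by
  rw [Finset.card_pos]
  constructor
  · rintro ⟨i, hi⟩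
    simp only [Finset.mem_filter] at hi
    exact ⟨i, hi.2⟩
  · rintro ⟨i, hi⟩
    exact ⟨i, by simp only [Finset.mem_filter, Finset.mem_univ, true_and]; exact hi⟩

lemma pairing {u : ℕ} (hu : u < c+d) :
    (∃ i, s.z i = 2*(u:ℤ)+1) ↔ (∃ i, s.z i = 2*(u:ℤ)+2) := by
  have h0 := evenIW s (t := 2*u) (by omega) (by omega)
  have h2 := evenIW s (t := 2*u+2) (by omega) (by omega)
  have hs1 := stepIW s (2*u)
  have hs2 := stepIW s (2*u+1)
  have he1 := eCard_le_one s (2*(u:ℤ)+1)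
  have he2 := eCard_le_one s (2*(u:ℤ)+2)
  have hc1 : ((2*u:ℕ):ℤ)+1 = 2*(u:ℤ)+1 := by push_cast; ring
  have hc2 : ((2*u+1:ℕ):ℤ)+1 = 2*(u:ℤ)+2 := by push_cast; ring
  rw [hc1] at hs1
  rw [hc2] at hs2
  have hIW : IW s (2*u+1+1) = IW s (2*u+2) := by norm_num
  rw [hIW] at hs2
  rw [← eCard_pos_iff, ← eCard_pos_iff]
  omega

lemma topM : ¬ ∃ i, s.z i = 2*((c:ℤ)+d)+1 := by
  rintro ⟨i, hi⟩
  have h1 : i.1 < 2*c := by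
    rcases zsign s i with ⟨h,_⟩|⟨_,h⟩
    · exact h
    · omega
  obtain ⟨B, hB, hform⟩ := zpos s i h1
  have hcard := cardIW_of_pos s i h1
  rw [hi] at hcard hform
  have htt : ((2*((c:ℤ)+d)+1)).toNat = 2*(c+d)+1 := by omega
  rw [htt] at hcard
  have hset : IW s (2*(c+d)+1) = Finset.univ.filter (fun i' : Fin (2*(c+d)+1) => i'.1 < 2*c) := by
    ext i'
    simp only [IW, Finset.mem_filter, Finset.mem_univ, true_and]
    constructor
    · rintro ⟨ha, _⟩
      rcases zsign s i' with ⟨h,_⟩|⟨_,h⟩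
      · exact h
      · omega
    · intro h
      rcases zsign s i' with ⟨_,ha⟩|⟨h',_⟩
      · refine ⟨ha, ?_⟩
        have hb := (zbound s i').2
        have := le_abs_self (s.z i')
        push_cast at hb
        omega
      · omega
  rw [hset, cardFinFilter _ (fun a => a < 2*c)] at hcard
  have hrange : (Finset.range (2*(c+d)+1)).filter (fun a => a < 2*c) = Finset.range (2*c) := by
    ext a
    simp only [Finset.mem_filter, Finset.mem_range]
    omega
  rw [hrange, Finset.card_range] at hcard
  omega

def pairF (j : Fin (c+d)) : Finset ℤ := {2*(j.1:ℤ)+1, 2*(j.1:ℤ)+2}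

def tgt (S₀ : Finset (Fin (c+d))) : Finset ℤ :=
  S₀.biUnion pairF ∪ ((S₀ᶜ.biUnion pairF) ∪ {2*((c:ℤ)+d)+1}).image (fun x => -x)

lemma mem_tgt (S₀ : Finset (Fin (c+d))) (x : ℤ) : x ∈ tgt S₀ ↔
    ((∃ j ∈ S₀, x = 2*(j.1:ℤ)+1 ∨ x = 2*(j.1:ℤ)+2) ∨
     (∃ j ∈ S₀ᶜ, x = -(2*(j.1:ℤ)+1) ∨ x = -(2*(j.1:ℤ)+2)) ∨ x = -(2*((c:ℤ)+d)+1)) := by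
  simp only [tgt, pairF, Finset.mem_union, Finset.mem_biUnion, Finset.mem_image,
    Finset.mem_insert, Finset.mem_singleton]
  constructor
  · rintro (⟨j, hj, h⟩ | ⟨y, (⟨j, hj, h⟩ | h), rfl⟩)
    · exact Or.inl ⟨j, hj, h⟩
    · exact Or.inr (Or.inl ⟨j, hj, by omega⟩)
    · exact Or.inr (Or.inr (by omega))
  · rintro (⟨j, hj, h⟩ | ⟨j, hj, h⟩ | h)
    · exact Or.inl ⟨j, hj, h⟩
    · exact Or.inr ⟨-x, Or.inl ⟨j, hj, by omega⟩, by omega⟩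
    · exact Or.inr ⟨-x, Or.inr (by omega), by omega⟩

lemma mem_extS (j : Fin (c+d)) : j ∈ extS s ↔ ∃ i, s.z i = 2*(j.1:ℤ)+2 := by
  simp only [extS, Finset.mem_filter, Finset.mem_univ, true_and, Finset.mem_image]

lemma image_eq_tgt : Finset.univ.image s.z = tgt (extS s) := by
  ext x
  rw [mem_tgt]
  simp only [Finset.mem_image, Finset.mem_univ, true_and]
  constructor
  · rintro ⟨i, rfl⟩
    rcases zsign s i with ⟨h1, h2⟩ | ⟨h1, h2⟩
    · have hb := zbound s i
      have habs : |s.z i| = s.z i := abs_of_pos (by omega)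
      rw [habs] at hb
      have hne : s.z i ≠ 2*((c:ℤ)+d)+1 := fun hcontra => topM s ⟨i, hcontra⟩
      obtain ⟨u, hu, hxu⟩ : ∃ u : ℕ, u < c+d ∧ (s.z i = 2*(u:ℤ)+1 ∨ s.z i = 2*(u:ℤ)+2) := by
        refine ⟨((s.z i).toNat - 1)/2, by omega, by omega⟩
      have hW2 : ∃ i', s.z i' = 2*(u:ℤ)+2 := by
        rcases hxu with h | h
        · exact (pairing s hu).mp ⟨i, h⟩
        · exact ⟨i, h⟩
      left
      exact ⟨⟨u, hu⟩, (mem_extS s ⟨u, hu⟩).mpr hW2, hxu⟩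
    · have hb := zbound s i
      have habs : |s.z i| = -(s.z i) := abs_of_neg (by omega)
      rw [habs] at hb
      by_cases htop : s.z i = -(2*((c:ℤ)+d)+1)
      · exact Or.inr (Or.inr htop)
      · obtain ⟨u, hu, hxu⟩ : ∃ u : ℕ, u < c+d ∧
            (s.z i = -(2*(u:ℤ)+1) ∨ s.z i = -(2*(u:ℤ)+2)) := by
          refine ⟨(((-(s.z i)).toNat) - 1)/2, by omega, by omega⟩
        refine Or.inr (Or.inl ⟨⟨u, hu⟩, ?_, hxu⟩)
        rw [Finset.mem_compl, mem_extS]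
        rintro ⟨i', hi'⟩
        simp only [Fin.val_mk] at hi'
        rcases hxu with h | h
        · obtain ⟨i'', hi''⟩ := (pairing s hu).mpr ⟨i', hi'⟩
          have heq : i'' = i := by
            apply zinj
            rw [hi'', habs, abs_of_pos (by omega)]
            omega
          rw [heq] at hi''
          omega
        · have heq : i' = i := by
            apply zinj
            rw [hi', habs, abs_of_pos (by omega)]
            omega
          rw [heq] at hi'
          omega
  · rintro (⟨j, hj, h⟩ | ⟨j, hj, h⟩ | h)
    · obtain ⟨i', hi'⟩ := (mem_extS s j).mp hj
      rcases h with rfl | rfl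
      · obtain ⟨i'', hi''⟩ := (pairing s j.isLt).mpr ⟨i', hi'⟩
        exact ⟨i'', hi''⟩
      · exact ⟨i', hi'⟩
    · rw [Finset.mem_compl, mem_extS] at hj
      have hj2 : ¬ ∃ i, s.z i = 2*(j.1:ℤ)+1 := fun hcon =>
        hj ((pairing s j.isLt).mp hcon)
      have hy : (1:ℤ) ≤ -x ∧ -x ≤ 2*(c+d)+1 := by
        have := j.isLt
        rcases h with rfl | rfl <;> constructor <;> push_cast <;> omega
      obtain ⟨i, hi⟩ := zsurjabs s hy.1 (by push_cast at hy ⊢; omega)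
      refine ⟨i, ?_⟩
      rcases abs_cases (s.z i) with ⟨ha, _⟩ | ⟨ha, _⟩
      · rw [ha] at hi
        exfalso
        rcases h with rfl | rfl
        · exact hj2 ⟨i, by omega⟩
        · exact hj ⟨i, by omega⟩
      · rw [ha] at hi
        omega
    · obtain ⟨i, hi⟩ := zsurjabs s (x := 2*((c:ℤ)+d)+1) (by push_cast; omega) (by push_cast; omega)
      refine ⟨i, ?_⟩
      rcases abs_cases (s.z i) with ⟨ha, _⟩ | ⟨ha, _⟩
      · exact absurd ⟨i, by omega⟩ (topM s)
      · omega

lemma cardExt : (extS s).card = c := by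
  have hfilter : (Finset.univ.filter (fun i : Fin (2*(c+d)+1) => (0:ℤ) < s.z i))
      = Finset.univ.filter (fun i : Fin (2*(c+d)+1) => i.1 < 2*c) := by
    ext i
    simp only [Finset.mem_filter, Finset.mem_univ, true_and]
    rcases zsign s i with ⟨h1, h2⟩ | ⟨h1, h2⟩ <;> omega
  have hcard2 : (Finset.univ.filter (fun i : Fin (2*(c+d)+1) => (0:ℤ) < s.z i)).card = 2*c := by
    rw [hfilter, cardFinFilter _ (fun a => a < 2*c)]
    have : (Finset.range (2*(c+d)+1)).filter (fun a => a < 2*c) = Finset.range (2*c) := by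
      ext a
      simp only [Finset.mem_filter, Finset.mem_range]
      omega
    rw [this, Finset.card_range]
  have hX : (Finset.univ.filter (fun i : Fin (2*(c+d)+1) => (0:ℤ) < s.z i)).image s.z
      = (extS s).biUnion pairF := by
    ext x
    simp only [Finset.mem_image, Finset.mem_filter, Finset.mem_univ, true_and,
      Finset.mem_biUnion, pairF, Finset.mem_insert, Finset.mem_singleton]
    constructor
    · rintro ⟨i, hpos, rfl⟩
      have hmem : s.z i ∈ Finset.univ.image s.z := Finset.mem_image_of_mem _ (Finset.mem_univ i)
      rw [image_eq_tgt, mem_tgt] at hmem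
      rcases hmem with ⟨j, hj, hh⟩ | ⟨j, hj, hh⟩ | hh
      · exact ⟨j, hj, hh⟩
      · omega
      · omega
    · rintro ⟨j, hj, hh⟩
      have hmem : x ∈ Finset.univ.image s.z := by
        rw [image_eq_tgt, mem_tgt]
        exact Or.inl ⟨j, hj, hh⟩
      obtain ⟨i, -, hi⟩ := Finset.mem_image.mp hmem
      exact ⟨i, by omega, hi⟩
  have hinj : Set.InjOn s.z (Finset.univ.filter (fun i : Fin (2*(c+d)+1) => (0:ℤ) < s.z i)) :=
    fun i _ i' _ h => s.z_anti.injective h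
  have hcard3 := Finset.card_image_of_injOn hinj
  rw [hX, hcard2] at hcard3
  have hdisjp : ∀ j ∈ extS s, ∀ j' ∈ extS s, j ≠ j' → Disjoint (pairF j) (pairF j') := by
    intro j _ j' _ hne
    rw [Finset.disjoint_left]
    intro x hx hx'
    simp only [pairF, Finset.mem_insert, Finset.mem_singleton] at hx hx'
    have : j.1 = j'.1 := by omega
    exact hne (Fin.ext this)
  rw [Finset.card_biUnion hdisjp] at hcard3
  have hpaircard : ∀ j ∈ extS s, (pairF j).card = 2 := by
    intro j _
    exact Finset.card_pair (by omega)
  rw [Finset.sum_congr rfl hpaircard, Finset.sum_const, smul_eq_mul] at hcard3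
  omega

end Struct

section RoundTrip

variable {c d : ℕ} {hp : 1 ≤ 2*d+2} {hn : 2*c - 1 + (2*d+2) = 2*(c+d)+1}

lemma ext_sol (S : Finset (Fin (c+d))) (hS : S.card = c) (hc : 1 ≤ c) :
    extS (hp := hp) (hn := hn) (sol c d S hS hc) = S := by
  ext j
  rw [mem_extS]
  constructor
  · rintro ⟨i, hi⟩
    by_cases h : i.1 < 2*c
    · have hzz : (sol c d S hS hc).z i = wv c d S (2*c-1-i.1) := by
        show zf c d S i = _
        simp only [zf]
        rw [if_pos h]
      rw [hzz, wv] at hi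
      have hsv : sv (c+d) c S ((2*c-1-i.1)/2) = j.1 := by omega
      exact (mem_iff_sv hS j).mpr ⟨(2*c-1-i.1)/2, by omega, hsv⟩
    · have hzz : (sol c d S hS hc).z i = -(mvf c d S (i.1-2*c)) := by
        show zf c d S i = _
        simp only [zf]
        rw [if_neg h]
      rw [hzz] at hi
      have := mvf_pos (S:=S) (c:=c) (d:=d) (i.1-2*c)
      omega
  · intro hj
    obtain ⟨t, ht, hsv⟩ := (mem_iff_sv hS j).mp hj
    refine ⟨⟨2*c-1-(2*t+1), by omega⟩, ?_⟩
    show zf c d S _ = _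
    rw [zf_mk_pos hS (by omega), wv]
    have h1 : (2*t+1)/2 = t := by omega
    have h2 : (2*t+1)%2 = 1 := by omega
    rw [h1, h2, hsv]
    push_cast
    ring

lemma det_ba {s s' : RhoSol01 (2*(c+d)+1) (2*d+2) (2*c) hp hn} (hz : s.z = s'.z) :
    s.b = s'.b ∧ s.a = s'.a := by
  constructor
  · funext i
    have e1 := s.hzb i
    have e2 := s'.hzb i
    have hzeq : s.z ⟨i.1, by have := i.isLt; omega⟩ = s'.z ⟨i.1, by have := i.isLt; omega⟩ :=
      congrFun hz _
    omega
  · funext v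
    have hv := v.isLt
    have e1 := s.hza ⟨2*d+2-2-v.1, by omega⟩
    have e2 := s'.hza ⟨2*d+2-2-v.1, by omega⟩
    simp only [Fin.val_mk] at e1 e2
    have hidx : (⟨2*d+2-2-(2*d+2-2-v.1), by omega⟩ : Fin (2*d+2-1)) = v := by
      apply Fin.ext
      show 2*d+2-2-(2*d+2-2-v.1) = v.1
      omega
    have e1' : s.z ⟨2*c + (2*d+2-2-v.1), by omega⟩ +
        2 * s.a ⟨2*d+2-2-(2*d+2-2-v.1), by omega⟩ = -((2*d+2-2-v.1 : ℕ) : ℤ) - 1 := e1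
    have e2' : s'.z ⟨2*c + (2*d+2-2-v.1), by omega⟩ +
        2 * s'.a ⟨2*d+2-2-(2*d+2-2-v.1), by omega⟩ = -((2*d+2-2-v.1 : ℕ) : ℤ) - 1 := e2
    have hlink1 : s.a ⟨2*d+2-2-(2*d+2-2-v.1), by omega⟩ = s.a v := congrArg s.a hidx
    have hlink2 : s'.a ⟨2*d+2-2-(2*d+2-2-v.1), by omega⟩ = s'.a v := congrArg s'.a hidx
    have hzeq : s.z ⟨2*c + (2*d+2-2-v.1), by omega⟩ = s'.z ⟨2*c + (2*d+2-2-v.1), by omega⟩ :=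
      congrFun hz _
    omega

set_option maxHeartbeats 1000000 in
lemma sol_extS (s : RhoSol01 (2*(c+d)+1) (2*d+2) (2*c) hp hn) (hc : 1 ≤ c) :
    s = sol c d (extS s) (cardExt s) hc := by
  have hS0 : (extS s).card = c := cardExt s
  have hz : s.z = zf c d (extS s) := by
    apply strictAnti_eq_of_image_eq s.z_anti (zf_anti hS0)
    rw [image_eq_tgt s]
    have h2 := image_eq_tgt (sol c d (extS s) hS0 hc)
    rw [ext_sol (extS s) hS0 hc] at h2
    exact h2.symm
  have hz' : s.z = (sol c d (extS s) hS0 hc).z := hz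
  obtain ⟨hb, ha⟩ := det_ba hz'
  exact RhoSol01.ext' hz' hb ha

end RoundTrip

end Stmt15

/-- Theorem on `X'(p,q;0,1)` with `p, q` even: the number of solutions equals
`C(k−1, q/2) = C(k−1, (p−2)/2)` (here `n = 2k−1`, `p + q = 2k`, `p, q` even
positive). -/
theorem stmt15 (n k p q : ℕ) (hk : 1 ≤ k) (hn : n = 2 * k - 1)
    (hppos : 0 < p) (hqpos : 0 < q) (hpq : p + q = 2 * k)
    (hpe : p % 2 = 0) (hqe : q % 2 = 0) :
    Nat.card (RhoSol01 n p q hppos (by omega)) = Nat.choose (k - 1) (q / 2) ∧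
      Nat.choose (k - 1) (q / 2) = Nat.choose (k - 1) ((p - 2) / 2) := by
  obtain ⟨c, rfl⟩ : ∃ c, q = 2 * c := ⟨q/2, by omega⟩
  obtain ⟨d, rfl⟩ : ∃ d, p = 2 * d + 2 := ⟨(p-2)/2, by omega⟩
  obtain rfl : k = c+d+1 := by omega
  obtain rfl : n = 2*(c+d)+1 := by omega
  have hc : 1 ≤ c := by omega
  have h1 : 2*c/2 = c := by omega
  have h2 : c+d+1-1 = c+d := by omega
  have h3 : (2*d+2-2)/2 = d := by omega
  constructor
  · have hcongr := Nat.card_congr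
      (⟨fun s => (⟨Stmt15.extS s, Stmt15.cardExt s⟩ : {S : Finset (Fin (c+d)) // S.card = c}),
        fun Sp => Stmt15.sol c d Sp.1 Sp.2 hc,
        fun s => (Stmt15.sol_extS s hc).symm,
        fun Sp => Subtype.ext (Stmt15.ext_sol Sp.1 Sp.2 hc)⟩ :
        RhoSol01 (2*(c+d)+1) (2*d+2) (2*c) hppos (by omega) ≃
          {S : Finset (Fin (c+d)) // S.card = c})
    rw [hcongr, Nat.card_eq_fintype_card, Fintype.card_finset_len, Fintype.card_fin, h1, h2]
  · rw [h1, h2, h3]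
    have h4 := Nat.choose_symm (show c ≤ c+d by omega)
    have h5 : c+d-c = d := by omega
    rw [h5] at h4
    exact h4.symm
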